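/- Define the sequence x₀ = 1/2 + ra, x₁ = (s₂ + 2rs₂a)(1/2 + 1/(2s₂) − x₀), and x_{i+1} = (s₁ + 2rs₁a)(x_i − 1/2 + 1/(2s₁)) for i ≥ 1. Then for every integer m ≥ 1, x_m = 1/2 − 1/(2s₁) if and only if (s₁ + 2rs₁a)^m = 1/(4r²s₂²a²). -/

import Mathlib

/-- The orbit of the point 1/2 + ra under the perturbed W-shaped map W_a:
`x₀ = 1/2 + ra`, `x₁ = (s₂+2rs₂a)(1/2 + 1/(2s₂) − x₀)`, and
`x_{i+1} = (s₁+2rs₁a)(x_i − 1/2 + 1/(2s₁))` for `i ≥ 1`. -/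
noncomputable def orbitW (s₁ s₂ r a : ℝ) : ℕ → ℝ
  | 0 => 1 / 2 + r * a
  | 1 => (s₂ + 2 * r * s₂ * a) * (1 / 2 + 1 / (2 * s₂) - (1 / 2 + r * a))
  | (n + 2) => (s₁ + 2 * r * s₁ * a) * (orbitW s₁ s₂ r a (n + 1) - 1 / 2 + 1 / (2 * s₁))

theorem stmt_2 (s₁ s₂ r a : ℝ) (hs₁ : 1 < s₁) (hs₂ : 1 < s₂)
    (hsum : 1 / s₁ + 1 / s₂ = 1) (hr : 0 < r) (ha : 0 < a) :
    ∀ m : ℕ, 1 ≤ m →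
      (orbitW s₁ s₂ r a m = 1 / 2 - 1 / (2 * s₁) ↔
        (s₁ + 2 * r * s₁ * a) ^ m = 1 / (4 * r ^ 2 * s₂ ^ 2 * a ^ 2)) := by
  have hs₁0 : s₁ ≠ 0 := by linarith
  have hs₂0 : s₂ ≠ 0 := by linarith
  have hr0 : r ≠ 0 := ne_of_gt hr
  have ha0 : a ≠ 0 := ne_of_gt ha
  have hprod : s₁ * s₂ = s₁ + s₂ := by
    field_simp at hsum
    linarith
  set L : ℝ := s₁ + 2 * r * s₁ * a with hLdef
  set K : ℝ := 2 * r ^ 2 * a ^ 2 * s₁ * s₂ * (1 + 2 * r * a) with hKdef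
  have hLpos : 1 < L := by
    have : 0 < 2 * r * s₁ * a := by positivity
    simp only [hLdef]; linarith
  have hL0 : L ≠ 0 := by linarith
  have hL1 : (1 : ℝ) - L ≠ 0 := by
    intro h; rw [sub_eq_zero] at h; linarith [h]
  have hK0 : K ≠ 0 := by
    have : (0:ℝ) < 2 * r ^ 2 * a ^ 2 * s₁ * s₂ * (1 + 2 * r * a) := by positivity
    simp only [hKdef]; linarith
  -- closed form
  have key : ∀ n : ℕ,
      (1 - L) * (orbitW s₁ s₂ r a (n + 1) - 1 / 2) = L ^ n * K + r * a := by
    intro n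
    induction n with
    | zero =>
      simp only [orbitW, pow_zero, one_mul, hLdef, hKdef]
      field_simp
      linear_combination (2*r*a*(1+2*r*a)) * hprod
    | succ k ih =>
      show (1 - L) * (orbitW s₁ s₂ r a (k + 2) - 1 / 2) = L ^ (k + 1) * K + r * a
      have : orbitW s₁ s₂ r a (k + 2)
          = L * (orbitW s₁ s₂ r a (k + 1) - 1 / 2 + 1 / (2 * s₁)) := rfl
      rw [this]
      have hhalf : L * (1 / (2 * s₁)) = 1 / 2 + r * a := by
        field_simp [hLdef]; ring
      have expand : (1 - L) * (L * (orbitW s₁ s₂ r a (k + 1) - 1 / 2 + 1 / (2 * s₁)) - 1 / 2)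
          = L * ((1 - L) * (orbitW s₁ s₂ r a (k + 1) - 1 / 2))
            + (1 - L) * (L * (1 / (2 * s₁)) - 1 / 2) := by ring
      rw [expand, ih, hhalf]
      ring
  intro m hm
  obtain ⟨n, rfl⟩ : ∃ n, m = n + 1 := ⟨m - 1, (Nat.succ_pred_eq_of_pos hm).symm⟩
  have h := key n
  constructor
  · intro hx
    rw [hx] at h
    -- h : (1 - L) * (1/2 - 1/(2 s₁) - 1/2) = L^n * K + r*a
    have hLn : L ^ (n + 1) * K = L * ((1 - L) * (1 / 2 - 1 / (2 * s₁) - 1 / 2) - r * a) := by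
      rw [pow_succ]
      rw [h]
      ring
    have hRHS : L * ((1 - L) * (1 / 2 - 1 / (2 * s₁) - 1 / 2) - r * a)
        = (1 / (4 * r ^ 2 * s₂ ^ 2 * a ^ 2)) * K := by
      simp only [hLdef, hKdef]
      field_simp
      linear_combination (4) * hprod
    rw [hRHS] at hLn
    exact mul_right_cancel₀ hK0 hLn
  · intro hL
    have hLn : L ^ n = 1 / (4 * r ^ 2 * s₂ ^ 2 * a ^ 2) / L := by
      rw [eq_div_iff hL0]
      rw [← hL, pow_succ]
    rw [hLn] at h
    have hval : 1 / (4 * r ^ 2 * s₂ ^ 2 * a ^ 2) / L * K + r * a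
        = (1 - L) * (1 / 2 - 1 / (2 * s₁) - 1 / 2) := by
      simp only [hLdef, hKdef]
      field_simp
      linear_combination (-4) * hprod
    rw [hval] at h
    have := mul_left_cancel₀ hL1 h
    linarith
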